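/- Let Φ ∈ H^∞(𝕋, B(E)) and α ∈ 𝔻. If the Poisson integral P[Φ](α) does not have dense range in E, then, with M := ker P[Φ](α)* (a nonzero closed subspace of E), the Blaschke-Potapov factor P := b_α P_M + (I_E − P_M) is a nontrivial left inner divisor of Φ. -/

import Mathlib

open MeasureTheory Complex

noncomputable section

/-- Normalized arc-length (Haar) measure on the unit circle `𝕋`, realized as a
measure on `ℂ` supported on the unit circle. -/
def mT : Measure ℂ :=
  Measure.map (fun t : ℝ => Complex.exp (t * Complex.I))
    ((ENNReal.ofReal (2 * Real.pi))⁻¹ • volume.restrict (Set.Ioc 0 (2 * Real.pi)))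

variable {D E E' : Type*}
  [NormedAddCommGroup D] [InnerProductSpace ℂ D] [CompleteSpace D]
  [NormedAddCommGroup E] [InnerProductSpace ℂ E] [CompleteSpace E]
  [NormedAddCommGroup E'] [InnerProductSpace ℂ E'] [CompleteSpace E']

/-- The `n`-th Fourier coefficient `Φ̂(n)x = ∫_𝕋 z̄ⁿ Φ(z)x dm(z)` of an
operator-valued function, applied to the vector `x`. -/
def fc (Φ : ℂ → D →L[ℂ] E) (n : ℤ) (x : D) : E :=
  ∫ z, ((starRingEnd ℂ) z) ^ n • (Φ z x) ∂mT

/-- Membership in `H^∞(𝕋, B(D,E))`: SOT-measurable, essentially bounded in operator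
norm, with vanishing negative Fourier coefficients. -/
structure MemHinf (Φ : ℂ → D →L[ℂ] E) : Prop where
  meas : ∀ x : D, AEStronglyMeasurable (fun z => Φ z x) mT
  bdd : ∃ r : ℝ, ∀ᵐ z ∂mT, ‖Φ z‖ ≤ r
  neg : ∀ n : ℤ, n < 0 → ∀ x : D, fc Φ n x = 0

/-- An inner function: `Φ ∈ H^∞` with `Φ(z)*Φ(z) = I` a.e. -/
def IsInnerFn (Φ : ℂ → D →L[ℂ] E) : Prop :=
  MemHinf Φ ∧ ∀ᵐ z ∂mT,
    (ContinuousLinearMap.adjoint (Φ z)).comp (Φ z) = ContinuousLinearMap.id ℂ D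

/-- A two-sided inner function: inner and `Φ(z)Φ(z)* = I` a.e. -/
def IsTwoSidedInner (Φ : ℂ → D →L[ℂ] E) : Prop :=
  IsInnerFn Φ ∧ ∀ᵐ z ∂mT,
    (Φ z).comp (ContinuousLinearMap.adjoint (Φ z)) = ContinuousLinearMap.id ℂ E

/-- `Θ` is a left inner divisor of `Φ`: `Θ` is inner and `Φ = Θ A` for some `A ∈ H^∞`. -/
def IsLeftInnerDiv (Θ : ℂ → E' →L[ℂ] E) (Φ : ℂ → D →L[ℂ] E) : Prop :=
  IsInnerFn Θ ∧ ∃ A : ℂ → D →L[ℂ] E', MemHinf A ∧ ∀ᵐ z ∂mT, Φ z = (Θ z).comp (A z)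

/-- `Ω` is a right inner divisor of `Φ`: `Ω` is inner and `Φ = B Ω` for some `B ∈ H^∞`. -/
def IsRightInnerDiv (Ω : ℂ → D →L[ℂ] E') (Φ : ℂ → D →L[ℂ] E) : Prop :=
  IsInnerFn Ω ∧ ∃ B : ℂ → E' →L[ℂ] E, MemHinf B ∧ ∀ᵐ z ∂mT, Φ z = (B z).comp (Ω z)

/-- `Δ` is an inner divisor of `Φ`: both a left and a right inner divisor. -/
def IsInnerDiv (Δ Φ : ℂ → E →L[ℂ] E) : Prop :=
  IsLeftInnerDiv Δ Φ ∧ IsRightInnerDiv Δ Φ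

/-- A unitary operator between Hilbert spaces. -/
def IsUnitaryOp (U : D →L[ℂ] E) : Prop :=
  (ContinuousLinearMap.adjoint U).comp U = ContinuousLinearMap.id ℂ D ∧
    U.comp (ContinuousLinearMap.adjoint U) = ContinuousLinearMap.id ℂ E

/-- An orthogonal projection: idempotent and self-adjoint. -/
def IsOrthoProj (P : E →L[ℂ] E) : Prop :=
  P.comp P = P ∧ ContinuousLinearMap.adjoint P = P

/-- A partial isometry: `T T* T = T`. -/
def IsPartialIsom (T : D →L[ℂ] E) : Prop :=
  (T.comp (ContinuousLinearMap.adjoint T)).comp T = T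

/-- The Blaschke factor `b_α(z) = (z - α)/(1 - ᾱ z)`. -/
def blaschke (α z : ℂ) : ℂ := (z - α) / (1 - (starRingEnd ℂ) α * z)

/-- The Poisson integral of `Φ ∈ H^∞` at `ζ ∈ 𝔻`, applied to the vector `x`:
`P[Φ](ζ)x = Σ_{n ≥ 0} Φ̂(n)x ζⁿ`. -/
def poissonFn (Φ : ℂ → D →L[ℂ] E) (ζ : ℂ) (x : D) : E :=
  ∑' n : ℕ, ζ ^ n • fc Φ (n : ℤ) x

/-- The `n`-th Fourier coefficient of a vector-valued function. -/
def vfc (f : ℂ → E) (n : ℤ) : E :=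
  ∫ z, ((starRingEnd ℂ) z) ^ n • f z ∂mT

/-- Membership in `H²(𝕋, E)`: square Bochner-integrable with vanishing
negative Fourier coefficients. -/
def MemH2 (f : ℂ → E) : Prop :=
  MemLp f 2 mT ∧ ∀ n : ℤ, n < 0 → vfc f n = 0

/-- A finite Blaschke product `θ = ∏ b_{αₙ}` with all `αₙ ∈ 𝔻`. -/
def IsFiniteBlaschkeProd (θ : ℂ → ℂ) : Prop :=
  ∃ (M : ℕ) (α : Fin M → ℂ), (∀ i, ‖α i‖ < 1) ∧ ∀ z, θ z = ∏ i, blaschke (α i) z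

/-- `Φ ∈ H^∞(𝕋, B(D,E))` is rational: `θ H²(𝕋,E) ⊆ ker H_{Φ*}` for some finite
Blaschke product `θ`, where `ker H_{Φ*} = {f ∈ H²(𝕋,E) : Φ*f ∈ H²(𝕋,D)}`. -/
def IsRationalFn (Φ : ℂ → D →L[ℂ] E) : Prop :=
  ∃ θ : ℂ → ℂ, IsFiniteBlaschkeProd θ ∧
    ∀ f : ℂ → E, MemH2 f →
      MemH2 (fun z => θ z • f z) ∧
      MemH2 (fun z => θ z • (ContinuousLinearMap.adjoint (Φ z)) (f z))

/-- A finite Blaschke-Potapov product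
`Δ = V ∏ₘ (b_{αₘ} Pₘ + (I - Pₘ))` with `V` a constant unitary, `αₘ ∈ 𝔻` and
`Pₘ` orthogonal projections. -/
def IsBPProduct (Δ : ℂ → E →L[ℂ] E) : Prop :=
  ∃ (M : ℕ) (V : E →L[ℂ] E) (α : Fin M → ℂ) (P : Fin M → E →L[ℂ] E),
    IsUnitaryOp V ∧ (∀ i, ‖α i‖ < 1) ∧ (∀ i, IsOrthoProj (P i)) ∧
    ∀ᵐ z ∂mT, Δ z = V * (List.ofFn fun i => blaschke (α i) z • P i + (1 - P i)).prod

/-- `Φ` and `Ψ` (with values in operators into the same space `E`) are left coprime: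
every common left inner divisor is a constant unitary. -/
def LeftCoprime {D₁ D₂ : Type*}
    [NormedAddCommGroup D₁] [InnerProductSpace ℂ D₁] [CompleteSpace D₁]
    [NormedAddCommGroup D₂] [InnerProductSpace ℂ D₂] [CompleteSpace D₂]
    (Φ : ℂ → D₁ →L[ℂ] E) (Ψ : ℂ → D₂ →L[ℂ] E) : Prop :=
  ∀ (F : Type) (_ : NormedAddCommGroup F) (_ : InnerProductSpace ℂ F) (_ : CompleteSpace F)
    (Θ : ℂ → F →L[ℂ] E), IsLeftInnerDiv Θ Φ → IsLeftInnerDiv Θ Ψ →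
      ∃ U : F →L[ℂ] E, IsUnitaryOp U ∧ ∀ᵐ z ∂mT, Θ z = U


/- ### Auxiliary infrastructure -/

lemma measurable_expI : Measurable (fun t : ℝ => Complex.exp (t * Complex.I)) :=
  ((Complex.continuous_ofReal.mul continuous_const).cexp).measurable

instance : IsProbabilityMeasure mT := by
  constructor
  rw [mT, Measure.map_apply measurable_expI MeasurableSet.univ]
  simp only [Set.preimage_univ, Measure.smul_apply, Measure.restrict_apply MeasurableSet.univ,
    Set.univ_inter, Real.volume_Ioc, smul_eq_mul]
  rw [sub_zero, ENNReal.inv_mul_cancel]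
  · simp [Real.pi_ne_zero, Real.pi_pos.le, Real.two_pi_pos, Real.pi_pos]
  · exact ENNReal.ofReal_ne_top

lemma mT_ae_norm : ∀ᵐ z ∂mT, ‖z‖ = 1 := by
  rw [ae_iff, mT, Measure.map_apply measurable_expI]
  · convert measure_empty (μ := ((ENNReal.ofReal (2 * Real.pi))⁻¹ • volume.restrict (Set.Ioc 0 (2 * Real.pi))))
    ext t
    simp [Complex.norm_exp_ofReal_mul_I t]
  · exact (measurableSet_eq_fun (by fun_prop) measurable_const).compl

lemma integral_mT {F : Type*} [NormedAddCommGroup F] [NormedSpace ℂ F] (f : ℂ → F)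
    (hf : AEStronglyMeasurable f mT) :
    ∫ z, f z ∂mT
      = (2 * Real.pi)⁻¹ • ∫ t in Set.Ioc 0 (2 * Real.pi), f (Complex.exp (t * Complex.I)) := by
  rw [mT, integral_map measurable_expI.aemeasurable hf, integral_smul_measure,
    ENNReal.toReal_inv, ENNReal.toReal_ofReal Real.two_pi_pos.le]

lemma mT_moment (m : ℕ) : ∫ z, z ^ (m + 1) ∂mT = 0 := by
  rw [integral_mT _ (Continuous.aestronglyMeasurable (by fun_prop))]
  have : ∀ t : ℝ, Complex.exp (t * Complex.I) ^ (m + 1)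
      = Complex.exp (((m : ℂ) + 1) * Complex.I * t) := by
    intro t
    rw [← Complex.exp_nat_mul]
    push_cast
    ring_nf
  rw [MeasureTheory.setIntegral_congr_fun measurableSet_Ioc (fun t _ => this t),
    ← intervalIntegral.integral_of_le Real.two_pi_pos.le,
    integral_exp_mul_complex (by simp [Complex.ext_iff]; positivity)]
  have h1 : ((m : ℂ) + 1) * Complex.I * ((2 * Real.pi : ℝ) : ℂ) = ((m + 1 : ℕ) : ℂ) * (2 * Real.pi * Complex.I) := by
    push_cast; ring
  rw [h1, Complex.exp_nat_mul_two_pi_mul_I]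
  simp

lemma mT_singleton (c : ℂ) : mT {c} = 0 := by
  rw [mT, Measure.map_apply measurable_expI (measurableSet_singleton c)]
  have hc : Set.Countable ((fun t : ℝ => Complex.exp (t * Complex.I)) ⁻¹' {c}) := by
    by_cases h : ∃ t₀ : ℝ, Complex.exp (t₀ * Complex.I) = c
    · obtain ⟨t₀, ht₀⟩ := h
      have : (fun t : ℝ => Complex.exp (t * Complex.I)) ⁻¹' {c}
          ⊆ Set.range (fun k : ℤ => t₀ + k * (2 * Real.pi)) := by
        intro t ht
        simp only [Set.mem_preimage, Set.mem_singleton_iff] at ht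
        rw [← ht₀, Complex.exp_eq_exp_iff_exists_int] at ht
        obtain ⟨n, hn⟩ := ht
        refine ⟨n, ?_⟩
        have h2 : (t : ℂ) * Complex.I = ((t₀ : ℂ) + n * (2 * Real.pi)) * Complex.I := by
          rw [hn]; push_cast; ring
        have h3 := mul_right_cancel₀ Complex.I_ne_zero h2
        exact_mod_cast h3.symm
      exact (Set.countable_range _).mono this
    · push_neg at h
      have : (fun t : ℝ => Complex.exp (t * Complex.I)) ⁻¹' {c} = ∅ := by
        ext t; simp [h t]
      simp [this]
  simp [Measure.restrict_apply' measurableSet_Ioc,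
    measure_mono_null Set.inter_subset_left (Set.Countable.measure_zero hc _)]

lemma integrable_mT {F : Type*} [NormedAddCommGroup F] (f : ℂ → F)
    (hm : AEStronglyMeasurable f mT) (C : ℝ) (hb : ∀ᵐ z ∂mT, ‖f z‖ ≤ C) :
    Integrable f mT :=
  memLp_one_iff_integrable.mp (MemLp.of_bound hm C hb)

lemma measurable_zpowC (n : ℤ) : Measurable (fun z : ℂ => z ^ n) := by
  cases n with
  | ofNat k => simpa using (measurable_id.pow_const k)
  | negSucc k =>
      simp only [zpow_negSucc]
      exact (measurable_id.pow_const (k+1)).inv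

lemma mT_moment_zpow (m : ℤ) (hm : 0 < m) : ∫ z, z ^ m ∂mT = 0 := by
  obtain ⟨k, hk⟩ : ∃ k, m.toNat = k + 1 := ⟨m.toNat - 1, by omega⟩
  have h : ∀ z : ℂ, z ^ m = z ^ (k + 1) := fun z => by
    rw [← hk, ← zpow_natCast]; congr 1; omega
  simp_rw [h]
  exact mT_moment k

lemma conj_unit {z : ℂ} (hz : ‖z‖ = 1) : (starRingEnd ℂ) z = z⁻¹ := by
  have h1 : z * (starRingEnd ℂ) z = 1 := by
    rw [Complex.mul_conj]
    norm_cast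
    rw [Complex.normSq_eq_norm_sq]
    simp only [hz, one_pow]
  exact eq_inv_of_mul_eq_one_left (by rw [mul_comm] at h1; exact h1)

lemma blaschke_denom_ne {α z : ℂ} (hα : ‖α‖ < 1) (hz : ‖z‖ = 1) :
    1 - (starRingEnd ℂ) α * z ≠ 0 := by
  intro h
  rw [sub_eq_zero] at h
  have : ‖(starRingEnd ℂ) α * z‖ = 1 := by rw [← h]; simp
  rw [norm_mul, RCLike.norm_conj, hz, mul_one] at this
  exact absurd this (ne_of_lt hα)

lemma blaschke_num_eq {α z : ℂ} (hz : ‖z‖ = 1) :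
    z - α = z * (starRingEnd ℂ) (1 - (starRingEnd ℂ) α * z) := by
  have h1 : z * (starRingEnd ℂ) z = 1 := by
    rw [Complex.mul_conj]
    norm_cast
    rw [Complex.normSq_eq_norm_sq]
    simp only [hz, one_pow]
  simp only [map_sub, map_mul, map_one, Complex.conj_conj]
  linear_combination α * h1

lemma blaschke_norm_eq_one {α z : ℂ} (hα : ‖α‖ < 1) (hz : ‖z‖ = 1) : ‖blaschke α z‖ = 1 := by
  rw [blaschke, norm_div, blaschke_num_eq hz, norm_mul, RCLike.norm_conj, hz, one_mul]
  rw [div_self]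
  intro h
  rw [norm_eq_zero] at h
  exact blaschke_denom_ne hα hz h

lemma blaschke_conj_mul {α z : ℂ} (hα : ‖α‖ < 1) (hz : ‖z‖ = 1) :
    (starRingEnd ℂ) (blaschke α z) * blaschke α z = 1 := by
  have h := blaschke_norm_eq_one hα hz
  rw [mul_comm, Complex.mul_conj]
  norm_cast
  rw [Complex.normSq_eq_norm_sq]
  simp only [h, one_pow]

lemma blaschke_inj {α : ℂ} (hα : ‖α‖ < 1) {z w : ℂ} (hz : ‖z‖ = 1) (hw : ‖w‖ = 1)
    (h : blaschke α z = blaschke α w) : z = w := by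
  have hdz := blaschke_denom_ne hα hz
  have hdw := blaschke_denom_ne hα hw
  rw [blaschke, blaschke, div_eq_div_iff hdz hdw] at h
  have h3 : (z - w) * (1 - α * (starRingEnd ℂ) α) = 0 := by linear_combination h
  rcases mul_eq_zero.mp h3 with h4 | h4
  · exact sub_eq_zero.mp h4
  · exfalso
    rw [sub_eq_zero] at h4
    have : ‖α * (starRingEnd ℂ) α‖ < 1 := by
      rw [norm_mul, RCLike.norm_conj]
      nlinarith [norm_nonneg α]
    rw [← h4] at this
    simp at this

lemma measurable_blaschke (α : ℂ) : Measurable (blaschke α) := by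
  unfold blaschke; fun_prop

lemma norm_one_ne_zero' {z : ℂ} (hz : ‖z‖ = 1) : z ≠ 0 := by
  intro h; simp [h] at hz

lemma zpow_norm_one {z : ℂ} (hz : ‖z‖ = 1) (n : ℤ) : ‖z ^ n‖ = 1 := by
  rw [norm_zpow, hz, one_zpow]

lemma conj_zpow_eq {z : ℂ} (hz : ‖z‖ = 1) (n : ℤ) :
    ((starRingEnd ℂ) z) ^ n = z ^ (-n) := by
  rw [conj_unit hz, inv_zpow, ← zpow_neg]

lemma mT_conj_moment (n : ℤ) (hn : n < 0) : ∫ z, ((starRingEnd ℂ) z) ^ n ∂mT = 0 := by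
  have h : ∀ᵐ z ∂mT, ((starRingEnd ℂ) z) ^ n = z ^ (-n) := by
    filter_upwards [mT_ae_norm] with z hz
    exact conj_zpow_eq hz n
  rw [integral_congr_ae h]
  exact mT_moment_zpow (-n) (by omega)

/- ### Fourier coefficients and the Poisson integral -/

lemma MemHinf.bdd' {Φ : ℂ → D →L[ℂ] E} (h : MemHinf Φ) :
    ∃ r : ℝ, 0 ≤ r ∧ ∀ᵐ z ∂mT, ‖Φ z‖ ≤ r := by
  obtain ⟨r, hr⟩ := h.bdd
  exact ⟨max r 0, le_max_right _ _, hr.mono fun z hz => hz.trans (le_max_left _ _)⟩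

lemma ae_norm_conj_zpow (n : ℤ) : ∀ᵐ z ∂mT, ‖((starRingEnd ℂ) z) ^ n‖ = 1 := by
  filter_upwards [mT_ae_norm] with z hz
  rw [norm_zpow, RCLike.norm_conj, hz, one_zpow]

lemma aesm_conj_zpow_smul {F : Type*} [NormedAddCommGroup F] [NormedSpace ℂ F]
    (n : ℤ) {f : ℂ → F} (hf : AEStronglyMeasurable f mT) :
    AEStronglyMeasurable (fun z => ((starRingEnd ℂ) z) ^ n • f z) mT :=
  (((measurable_zpowC n).comp (Complex.continuous_conj.measurable)).aestronglyMeasurable).smul hf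

lemma fc_integrable {Φ : ℂ → D →L[ℂ] E} (h : MemHinf Φ) {r : ℝ} (hr : ∀ᵐ z ∂mT, ‖Φ z‖ ≤ r)
    (n : ℤ) (x : D) : Integrable (fun z => ((starRingEnd ℂ) z) ^ n • (Φ z x)) mT := by
  refine integrable_mT _ (aesm_conj_zpow_smul n (h.meas x)) (r * ‖x‖) ?_
  filter_upwards [hr, ae_norm_conj_zpow n] with z h1 h2
  rw [norm_smul, h2, one_mul]
  exact ((Φ z).le_opNorm x).trans (mul_le_mul_of_nonneg_right h1 (norm_nonneg x))

lemma fc_norm_le {Φ : ℂ → D →L[ℂ] E} {r : ℝ} (hr : ∀ᵐ z ∂mT, ‖Φ z‖ ≤ r)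
    (n : ℤ) (x : D) : ‖fc Φ n x‖ ≤ r * ‖x‖ := by
  have := norm_integral_le_of_norm_le_const (μ := mT)
    (f := fun z => ((starRingEnd ℂ) z) ^ n • (Φ z x)) (C := r * ‖x‖) ?_
  · simpa [fc] using this
  · filter_upwards [hr, ae_norm_conj_zpow n] with z h1 h2
    rw [norm_smul, h2, one_mul]
    exact ((Φ z).le_opNorm x).trans (mul_le_mul_of_nonneg_right h1 (norm_nonneg x))

lemma fc_add {Φ : ℂ → D →L[ℂ] E} (h : MemHinf Φ) (n : ℤ) (x y : D) :
    fc Φ n (x + y) = fc Φ n x + fc Φ n y := by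
  obtain ⟨r, _, hr⟩ := h.bdd'
  have h1 := fc_integrable h hr n x
  have h2 := fc_integrable h hr n y
  simp only [fc]
  rw [← integral_add h1 h2]
  congr 1; ext z; rw [map_add, smul_add]

lemma fc_smul {Φ : ℂ → D →L[ℂ] E} (h : MemHinf Φ) (n : ℤ) (c : ℂ) (x : D) :
    fc Φ n (c • x) = c • fc Φ n x := by
  simp only [fc]
  rw [← integral_smul]
  congr 1; ext z; rw [(Φ z).map_smul, smul_comm]

lemma fc_zero {Φ : ℂ → D →L[ℂ] E} (n : ℤ) : fc Φ n (0 : D) = 0 := by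
  simp [fc]

lemma summable_poisson {Φ : ℂ → D →L[ℂ] E} {r : ℝ}
    (hr : ∀ᵐ z ∂mT, ‖Φ z‖ ≤ r) {α : ℂ} (hα : ‖α‖ < 1) (x : D) :
    Summable (fun n : ℕ => α ^ n • fc Φ (n : ℤ) x) := by
  refine Summable.of_norm_bounded
    ((summable_geometric_of_lt_one (norm_nonneg α) hα).mul_right (r * ‖x‖)) (fun n => ?_)
  rw [norm_smul, norm_pow]
  exact mul_le_mul_of_nonneg_left (fc_norm_le hr n x) (by positivity)

lemma poisson_dense {Φ : ℂ → D →L[ℂ] E} (h : MemHinf Φ) {α : ℂ} (hα : ‖α‖ < 1)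
    (htriv : ∀ x : E, (∀ y : D, (inner ℂ (poissonFn Φ α y) x : ℂ) = 0) → x = 0) :
    DenseRange (poissonFn Φ α) := by
  obtain ⟨r, hr0, hr⟩ := h.bdd'
  let K : Submodule ℂ E :=
    { carrier := Set.range (poissonFn Φ α)
      add_mem' := by
        rintro _ _ ⟨x, rfl⟩ ⟨y, rfl⟩
        refine ⟨x + y, ?_⟩
        simp only [poissonFn]
        rw [← Summable.tsum_add (summable_poisson hr hα x) (summable_poisson hr hα y)]
        congr 1; ext n; rw [fc_add h, smul_add]
      zero_mem' := ⟨0, by simp [poissonFn, fc_zero]⟩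
      smul_mem' := by
        rintro c _ ⟨x, rfl⟩
        refine ⟨c • x, ?_⟩
        simp only [poissonFn]
        rw [← ((summable_poisson hr hα x).hasSum.const_smul c).tsum_eq]
        congr 1; ext n; rw [fc_smul h, smul_comm] }
  have hbot : Kᗮ = ⊥ := by
    rw [Submodule.eq_bot_iff]
    intro x hx
    refine htriv x (fun y => hx _ ⟨y, rfl⟩)
  have htop : K.topologicalClosure = ⊤ := Submodule.topologicalClosure_eq_top_iff.mpr hbot
  exact Submodule.dense_iff_topologicalClosure_eq_top.mpr htop

/- ### Negative Fourier coefficients of the Blaschke factor -/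

lemma blaschke_neg_coeff {α : ℂ} (hα : ‖α‖ < 1) (n : ℤ) (hn : n < 0) :
    ∫ z, ((starRingEnd ℂ) z) ^ n * blaschke α z ∂mT = 0 := by
  set m : ℤ := -n with hm
  have hm1 : 1 ≤ m := by omega
  set f : ℂ → ℂ := fun z => ((starRingEnd ℂ) z) ^ n * blaschke α z with hf
  have hfm : AEStronglyMeasurable f mT :=
    (((measurable_zpowC n).comp Complex.continuous_conj.measurable).mul
      (measurable_blaschke α)).aestronglyMeasurable
  have hfb : ∀ᵐ z ∂mT, ‖f z‖ ≤ 1 := by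
    filter_upwards [mT_ae_norm] with z hz
    rw [hf]
    simp only [norm_mul]
    rw [norm_zpow, RCLike.norm_conj, hz, one_zpow, one_mul, blaschke_norm_eq_one hα hz]
  have hfint : Integrable f mT := integrable_mT f hfm 1 hfb
  set g : ℕ → ℂ → ℂ := fun N z =>
    ∑ k ∈ Finset.range N, ((starRingEnd ℂ) α) ^ k * (z ^ (m + 1 + k) - α * z ^ (m + k)) with hg
  have hgm : ∀ N, AEStronglyMeasurable (g N) mT := by
    intro N
    refine (Finset.measurable_sum _ (fun k _ => ?_)).aestronglyMeasurable
    exact measurable_const.mul ((measurable_zpowC _).sub (measurable_const.mul (measurable_zpowC _)))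
  have hgb : ∀ N, ∀ᵐ z ∂mT, ‖g N z‖ ≤ N * (1 + ‖α‖) := by
    intro N
    filter_upwards [mT_ae_norm] with z hz
    calc ‖g N z‖ ≤ ∑ k ∈ Finset.range N, ‖((starRingEnd ℂ) α) ^ k * (z ^ (m + 1 + k) - α * z ^ (m + k))‖ :=
          norm_sum_le _ _
      _ ≤ ∑ k ∈ Finset.range N, (1 + ‖α‖) := by
          refine Finset.sum_le_sum (fun k _ => ?_)
          rw [norm_mul, norm_pow, RCLike.norm_conj]
          have h1 : ‖α‖ ^ k ≤ 1 := pow_le_one₀ (norm_nonneg α) hα.le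
          have h2 : ‖z ^ (m + 1 + k) - α * z ^ (m + k)‖ ≤ 1 + ‖α‖ := by
            refine (norm_sub_le _ _).trans ?_
            rw [norm_mul, zpow_norm_one hz, zpow_norm_one hz, mul_one]
          nlinarith [norm_nonneg (z ^ (m+1+k) - α * z ^ (m+k)), norm_nonneg α]
      _ = N * (1 + ‖α‖) := by rw [Finset.sum_const, Finset.card_range, nsmul_eq_mul]
  have hgint : ∀ N, Integrable (g N) mT := fun N => integrable_mT _ (hgm N) _ (hgb N)
  have hgzero : ∀ N, ∫ z, g N z ∂mT = 0 := by
    intro N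
    rw [hg]
    rw [integral_finset_sum _ (fun k _ => by
      refine integrable_mT _ ?_ (1 + ‖α‖) ?_
      · exact (measurable_const.mul ((measurable_zpowC _).sub
          (measurable_const.mul (measurable_zpowC _)))).aestronglyMeasurable
      · filter_upwards [mT_ae_norm] with z hz
        rw [norm_mul, norm_pow, RCLike.norm_conj]
        have h1 : ‖α‖ ^ k ≤ 1 := pow_le_one₀ (norm_nonneg α) hα.le
        have h2 : ‖z ^ (m + 1 + k) - α * z ^ (m + k)‖ ≤ 1 + ‖α‖ := by
          refine (norm_sub_le _ _).trans ?_
          rw [norm_mul, zpow_norm_one hz, zpow_norm_one hz, mul_one]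
        nlinarith [norm_nonneg (z ^ (m+1+k) - α * z ^ (m+k)), norm_nonneg α])]
    refine Finset.sum_eq_zero (fun k _ => ?_)
    rw [integral_const_mul, integral_sub, integral_const_mul,
      mT_moment_zpow _ (by omega), mT_moment_zpow _ (by omega), mul_zero, sub_zero, mul_zero]
    · exact integrable_mT _ (measurable_zpowC _).aestronglyMeasurable 1 (by
        filter_upwards [mT_ae_norm] with z hz; rw [zpow_norm_one hz])
    · refine (integrable_mT _ (measurable_zpowC _).aestronglyMeasurable 1 (by
        filter_upwards [mT_ae_norm] with z hz; rw [zpow_norm_one hz])).const_mul α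
  have hrem : ∀ N : ℕ, ∀ᵐ z ∂mT, ‖f z - g N z‖ ≤ (1 + ‖α‖) / (1 - ‖α‖) * ‖α‖ ^ N := by
    intro N
    filter_upwards [mT_ae_norm] with z hz
    have hz0 : z ≠ 0 := norm_one_ne_zero' hz
    set w : ℂ := (starRingEnd ℂ) α * z with hw
    have hwn : ‖w‖ = ‖α‖ := by rw [hw, norm_mul, RCLike.norm_conj, hz, mul_one]
    have hw1 : w ≠ 1 := by
      intro h
      rw [h] at hwn
      simp only [norm_one] at hwn
      exact absurd hwn.symm (ne_of_lt hα)
    have hd : 1 - w ≠ 0 := blaschke_denom_ne hα hz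
    have hgeq : g N z = z ^ m * (z - α) * ((1 - w ^ N) / (1 - w)) := by
      have : ∑ k ∈ Finset.range N, w ^ k = (w ^ N - 1) / (w - 1) := geom_sum_eq hw1 N
      calc g N z = ∑ k ∈ Finset.range N, (z ^ m * (z - α)) * w ^ k := by
            refine Finset.sum_congr rfl (fun k _ => ?_)
            rw [hw, mul_pow]
            rw [zpow_add₀ hz0 (m+1) (k:ℤ), zpow_add₀ hz0 m (k:ℤ), zpow_add₀ hz0 m 1, zpow_one,
              zpow_natCast]
            ring
        _ = (z ^ m * (z - α)) * ∑ k ∈ Finset.range N, w ^ k := by rw [Finset.mul_sum]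
        _ = z ^ m * (z - α) * ((1 - w ^ N) / (1 - w)) := by
            rw [this]
            congr 1
            rw [div_eq_div_iff (by intro h; apply hd; rw [sub_eq_zero] at h ⊢; exact h.symm) hd]
            ring
    have hfeq : f z = z ^ m * (z - α) * (1 / (1 - w)) := by
      rw [hf]
      simp only
      rw [conj_zpow_eq hz n, ← hm, blaschke, ← hw]
      field_simp
    have heq : f z - g N z = z ^ m * (z - α) * (w ^ N / (1 - w)) := by
      rw [hfeq, hgeq]
      field_simp
      ring
    rw [heq]
    rw [norm_mul, norm_mul, norm_div, zpow_norm_one hz, one_mul, norm_pow, hwn]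
    have h1 : ‖z - α‖ ≤ 1 + ‖α‖ := by
      refine (norm_sub_le _ _).trans ?_; rw [hz]
    have h2 : 1 - ‖α‖ ≤ ‖1 - w‖ := by
      calc 1 - ‖α‖ = ‖(1:ℂ)‖ - ‖w‖ := by rw [norm_one, hwn]
        _ ≤ ‖1 - w‖ := norm_sub_norm_le _ _
    have h3 : 0 < 1 - ‖α‖ := by linarith
    have h4 : 0 < ‖1 - w‖ := lt_of_lt_of_le h3 h2
    have h5 : ‖α‖ ^ N / ‖1 - w‖ ≤ ‖α‖ ^ N / (1 - ‖α‖) :=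
      div_le_div_of_nonneg_left (by positivity) h3 h2
    calc ‖z - α‖ * (‖α‖ ^ N / ‖1 - w‖) ≤ (1 + ‖α‖) * (‖α‖ ^ N / (1 - ‖α‖)) :=
          mul_le_mul h1 h5 (by positivity) (by positivity)
      _ = (1 + ‖α‖) / (1 - ‖α‖) * ‖α‖ ^ N := by ring
  have hJ : ∀ N : ℕ, ‖∫ z, f z ∂mT‖ ≤ (1 + ‖α‖) / (1 - ‖α‖) * ‖α‖ ^ N := by
    intro N
    have hsub : ∫ z, (f z - g N z) ∂mT = (∫ z, f z ∂mT) - ∫ z, g N z ∂mT :=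
      integral_sub hfint (hgint N)
    have heq : ‖∫ z, f z ∂mT‖ = ‖∫ z, (f z - g N z) ∂mT‖ := by
      rw [hsub, hgzero N, sub_zero]
    rw [heq]
    have := norm_integral_le_of_norm_le_const (μ := mT) (hrem N)
    simpa using this
  have hlim : Filter.Tendsto (fun N : ℕ => (1 + ‖α‖) / (1 - ‖α‖) * ‖α‖ ^ N)
      Filter.atTop (nhds 0) := by
    rw [show (0:ℝ) = (1 + ‖α‖) / (1 - ‖α‖) * 0 by ring]
    exact (tendsto_pow_atTop_nhds_zero_of_lt_one (norm_nonneg α) hα).const_mul _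
  have h0 : ‖∫ z, f z ∂mT‖ ≤ 0 := ge_of_tendsto hlim (Filter.Eventually.of_forall hJ)
  simpa [hf] using norm_le_zero_iff.mp h0


/- ### Negative Fourier coefficients of the quotient -/

/-- Key lemma: the `P`-part of the quotient has vanishing negative Fourier coefficients. -/
lemma quot_neg_coeff {Φ : ℂ → E →L[ℂ] E} (hΦ : MemHinf Φ) {r : ℝ}
    (hr : ∀ᵐ z ∂mT, ‖Φ z‖ ≤ r) {α : ℂ} (hα : ‖α‖ < 1) (P : E →L[ℂ] E)
    (hPpois : ∀ y : E, P (poissonFn Φ α y) = 0) (n : ℤ) (hn : n < 0) (x : E) :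
    ∫ z, (((starRingEnd ℂ) z) ^ n * (starRingEnd ℂ) (blaschke α z)) • (P (Φ z x)) ∂mT = 0 := by
  obtain ⟨j, hj⟩ : ∃ j : ℕ, n = -(j + 1 : ℤ) := ⟨(-n - 1).toNat, by omega⟩
  -- the function g and its basic properties
  set g : ℂ → E := fun z => P (Φ z x) with hgdef
  have hgm : AEStronglyMeasurable g mT := P.continuous.comp_aestronglyMeasurable (hΦ.meas x)
  set C : ℝ := ‖P‖ * (r * ‖x‖) with hC
  have hgb : ∀ᵐ z ∂mT, ‖g z‖ ≤ C := by
    filter_upwards [hr] with z hz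
    calc ‖P (Φ z x)‖ ≤ ‖P‖ * ‖Φ z x‖ := P.le_opNorm _
      _ ≤ ‖P‖ * (r * ‖x‖) := by
          refine mul_le_mul_of_nonneg_left ?_ (norm_nonneg P)
          exact ((Φ z).le_opNorm x).trans (mul_le_mul_of_nonneg_right hz (norm_nonneg x))
  have hC0 : 0 ≤ C := by
    by_cases hE : C < 0
    · exfalso
      have : ∀ᵐ z ∂mT, False := by filter_upwards [hgb] with z hz; nlinarith [norm_nonneg (g z)]
      simpa using (ae_iff.mp this)
    · linarith
  -- the coefficients G
  set G : ℤ → E := fun k => ∫ z, ((starRingEnd ℂ) z) ^ k • g z ∂mT with hG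
  have hGint : ∀ k : ℤ, Integrable (fun z => ((starRingEnd ℂ) z) ^ k • g z) mT := by
    intro k
    refine integrable_mT _ ?_ C ?_
    · exact ((((measurable_zpowC k).comp Complex.continuous_conj.measurable)).aestronglyMeasurable).smul hgm
    · filter_upwards [hgb, mT_ae_norm] with z h1 h2
      rw [norm_smul, norm_zpow, RCLike.norm_conj, h2, one_zpow, one_mul]; exact h1
  have hGP : ∀ k : ℤ, G k = P (fc Φ k x) := by
    intro k
    rw [hG, fc, ← P.integral_comp_comm (fc_integrable hΦ hr k x)]
    simp only
    congr 1; ext z; rw [hgdef]; simp only [ContinuousLinearMap.map_smul]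
  have hGneg : ∀ k : ℤ, k < 0 → G k = 0 := fun k hk => by
    rw [hGP, hΦ.neg k hk x, map_zero]
  set cE : ℕ → E := fun i => P (fc Φ (i : ℤ) x) with hcE
  have hGnat : ∀ i : ℕ, G (i : ℤ) = cE i := fun i => hGP _
  -- summability and the tail sums T
  set u : ℕ → E := fun i => α ^ i • cE i with hu
  have husum : HasSum u 0 := by
    have h1 : HasSum (fun i : ℕ => α ^ i • fc Φ (i : ℤ) x) (poissonFn Φ α x) :=
      (summable_poisson hr hα x).hasSum
    have h2 := h1.mapL P
    rw [hPpois x] at h2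
    convert h2 using 2 with i
    rw [hu, hcE]
    simp only [ContinuousLinearMap.map_smul]
  set T : ℕ → E := fun K => ∑ i ∈ Finset.range K, u i with hT
  have hTlim : Filter.Tendsto T Filter.atTop (nhds 0) := husum.tendsto_sum_nat
  -- partial sums S
  set S : ℕ → E := fun N => ∑ k ∈ Finset.range N,
    α ^ k • (G (n + 1 + k) - (starRingEnd ℂ) α • G (n + k)) with hS
  -- closed form of S for large N
  have hSform : ∀ N : ℕ, j + 1 ≤ N →
      S N = α ^ j • T (N - j) - ((starRingEnd ℂ) α * α ^ (j + 1)) • T (N - j - 1) := by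
    intro N hN
    induction N, hN using Nat.le_induction with
    | base =>
        have hT1 : j + 1 - j = 1 := by omega
        have hT0 : j + 1 - j - 1 = 0 := by omega
        rw [hS, hT0, hT1]
        simp only
        rw [Finset.sum_range_succ]
        have hz : ∀ k ∈ Finset.range j,
            α ^ k • (G (n + 1 + k) - (starRingEnd ℂ) α • G (n + k)) = 0 := by
          intro k hk
          rw [Finset.mem_range] at hk
          rw [hGneg (n + 1 + k) (by omega), hGneg (n + k) (by omega)]
          simp
        rw [Finset.sum_eq_zero hz, zero_add]
        have e1 : n + 1 + (j : ℤ) = ((0 : ℕ) : ℤ) := by omega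
        have e2 : n + (j : ℤ) < 0 := by omega
        rw [e1, hGnat 0, hGneg _ e2]
        simp [hT, hu, Finset.sum_range_one]
    | succ N hN ih =>
        obtain ⟨L, rfl⟩ : ∃ L, N = L + 1 + j := ⟨N - j - 1, by omega⟩
        have e1 : L + 1 + j - j = L + 1 := by omega
        have e2 : L + 1 + j - j - 1 = L := by omega
        have e3 : L + 1 + j + 1 - j = L + 2 := by omega
        have e4 : L + 1 + j + 1 - j - 1 = L + 1 := by omega
        rw [e2, e1] at ih
        rw [hS] at ih ⊢
        simp only at ih ⊢
        rw [Finset.sum_range_succ, ih, e4, e3]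
        have f1 : n + 1 + ((L + 1 + j : ℕ) : ℤ) = ((L + 1 : ℕ) : ℤ) := by push_cast; omega
        have f2 : n + ((L + 1 + j : ℕ) : ℤ) = ((L : ℕ) : ℤ) := by push_cast; omega
        rw [f1, f2, hGnat, hGnat, hT]
        simp only
        rw [Finset.sum_range_succ (n := L + 1), Finset.sum_range_succ (n := L)]
        rw [hu]
        simp only
        have g1 : α ^ j • (α ^ (L + 1) • cE (L + 1)) = α ^ (L + 1 + j) • cE (L + 1) := by
          rw [smul_smul]; congr 1; ring
        have g2 : ((starRingEnd ℂ) α * α ^ (j + 1)) • (α ^ L • cE L)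
            = α ^ (L + 1 + j) • ((starRingEnd ℂ) α • cE L) := by
          rw [smul_smul, smul_smul]; congr 1; ring
        simp only [smul_add, smul_sub]
        rw [g1, g2]
        abel
  -- S tends to 0
  have hSlim : Filter.Tendsto S Filter.atTop (nhds 0) := by
    have h1 : Filter.Tendsto (fun N => T (N - j)) Filter.atTop (nhds 0) :=
      hTlim.comp (Filter.tendsto_sub_atTop_nat j)
    have h2 : Filter.Tendsto (fun N => T (N - j - 1)) Filter.atTop (nhds 0) := by
      have h := hTlim.comp (Filter.tendsto_sub_atTop_nat (j + 1))
      simpa [← Nat.sub_sub, Function.comp_def] using h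
    have h3 : Filter.Tendsto
        (fun N => α ^ j • T (N - j) - ((starRingEnd ℂ) α * α ^ (j + 1)) • T (N - j - 1))
        Filter.atTop (nhds 0) := by
      have := (h1.const_smul (α ^ j)).sub (h2.const_smul ((starRingEnd ℂ) α * α ^ (j + 1)))
      simpa using this
    refine h3.congr' ?_
    filter_upwards [Filter.eventually_atTop.mpr ⟨j + 1, fun N hN => hSform N hN⟩] with N hN
    exact hN.symm
  -- the integral expression: each partial sum identity
  set F : ℂ → E := fun z =>
    (((starRingEnd ℂ) z) ^ n * (starRingEnd ℂ) (blaschke α z)) • g z with hF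
  have hFm : AEStronglyMeasurable F mT := by
    refine AEStronglyMeasurable.smul ?_ hgm
    exact (((measurable_zpowC n).comp Complex.continuous_conj.measurable).mul
      ((Complex.continuous_conj.measurable).comp (measurable_blaschke α))).aestronglyMeasurable
  have hFint : Integrable F mT := by
    refine integrable_mT _ hFm C ?_
    filter_upwards [hgb, mT_ae_norm] with z h1 h2
    rw [hF]
    simp only
    rw [norm_smul, norm_mul, norm_zpow, RCLike.norm_conj, h2, one_zpow, RCLike.norm_conj,
      blaschke_norm_eq_one hα h2, one_mul, one_mul]
    exact h1
  -- identity ∫ F = S N + remainder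
  have hkey : ∀ N : ℕ, ‖(∫ z, F z ∂mT) - S N‖ ≤ (1 + ‖α‖) / (1 - ‖α‖) * C * ‖α‖ ^ N := by
    intro N
    set gN : ℂ → E := fun z => ∑ k ∈ Finset.range N,
      (α ^ k * (((starRingEnd ℂ) z) ^ (n + 1 + k) - (starRingEnd ℂ) α * ((starRingEnd ℂ) z) ^ (n + k))) • g z with hgN
    have hterm : ∀ k : ℕ, Integrable (fun z =>
        (α ^ k * (((starRingEnd ℂ) z) ^ (n + 1 + k) - (starRingEnd ℂ) α * ((starRingEnd ℂ) z) ^ (n + k))) • g z) mT := by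
      intro k
      refine integrable_mT _ ?_ ((1 + ‖α‖) * C) ?_
      · refine AEStronglyMeasurable.smul ?_ hgm
        refine (measurable_const.mul (((measurable_zpowC _).comp Complex.continuous_conj.measurable).sub
          (measurable_const.mul ((measurable_zpowC _).comp Complex.continuous_conj.measurable)))).aestronglyMeasurable
      · filter_upwards [hgb, mT_ae_norm] with z h1 h2
        rw [norm_smul, norm_mul]
        have hcz : ‖(starRingEnd ℂ) z‖ = 1 := by rw [RCLike.norm_conj, h2]
        have hb1 : ‖α ^ k‖ ≤ 1 := by
          rw [norm_pow]; exact pow_le_one₀ (norm_nonneg α) hα.le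
        have hb2 : ‖((starRingEnd ℂ) z) ^ (n + 1 + k) - (starRingEnd ℂ) α * ((starRingEnd ℂ) z) ^ (n + k)‖ ≤ 1 + ‖α‖ := by
          refine (norm_sub_le _ _).trans ?_
          rw [norm_mul, zpow_norm_one hcz, zpow_norm_one hcz, RCLike.norm_conj, mul_one]
        calc ‖α ^ k‖ * ‖_ - _‖ * ‖g z‖ ≤ 1 * (1 + ‖α‖) * C := by
              refine mul_le_mul (mul_le_mul hb1 hb2 (norm_nonneg _) zero_le_one) h1 (norm_nonneg _) ?_
              positivity
          _ = (1 + ‖α‖) * C := by ring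
    have hgNint : Integrable gN mT := by
      rw [hgN]; exact integrable_finset_sum _ (fun k _ => hterm k)
    have hgNval : ∫ z, gN z ∂mT = S N := by
      rw [hgN, integral_finset_sum _ (fun k _ => hterm k), hS]
      refine Finset.sum_congr rfl (fun k _ => ?_)
      have : ∀ z : ℂ, (α ^ k * (((starRingEnd ℂ) z) ^ (n + 1 + k) - (starRingEnd ℂ) α * ((starRingEnd ℂ) z) ^ (n + k))) • g z
          = α ^ k • (((starRingEnd ℂ) z) ^ (n + 1 + k) • g z) - (α ^ k * (starRingEnd ℂ) α) • (((starRingEnd ℂ) z) ^ (n + k) • g z) := by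
        intro z
        rw [smul_smul, smul_smul, ← sub_smul]
        congr 1
        ring
      rw [integral_congr_ae (Filter.Eventually.of_forall this)]
      have i1 : Integrable (fun z => α ^ k • (((starRingEnd ℂ) z) ^ (n + 1 + k) • g z)) mT := by
        simpa [Pi.smul_def] using (hGint (n + 1 + (k:ℤ))).smul (α ^ k)
      have i2 : Integrable (fun z => (α ^ k * (starRingEnd ℂ) α) • (((starRingEnd ℂ) z) ^ (n + k) • g z)) mT := by
        simpa [Pi.smul_def] using (hGint (n + (k:ℤ))).smul (α ^ k * (starRingEnd ℂ) α)
      rw [integral_sub i1 i2, integral_smul, integral_smul, smul_sub, smul_smul]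
    have hrem : ∀ᵐ z ∂mT, ‖F z - gN z‖ ≤ (1 + ‖α‖) / (1 - ‖α‖) * C * ‖α‖ ^ N := by
      filter_upwards [hgb, mT_ae_norm] with z h1 h2
      have hcz : ‖(starRingEnd ℂ) z‖ = 1 := by rw [RCLike.norm_conj, h2]
      have hcz0 : (starRingEnd ℂ) z ≠ 0 := norm_one_ne_zero' hcz
      set v : ℂ := (starRingEnd ℂ) z with hv
      set w : ℂ := α * v with hw
      have hwn : ‖w‖ = ‖α‖ := by rw [hw, norm_mul, hcz, mul_one]
      have hw1 : w ≠ 1 := fun h => absurd (by rw [h] at hwn; simpa using hwn.symm) (ne_of_lt hα)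
      have hd : 1 - w ≠ 0 := by
        intro h
        rw [sub_eq_zero] at h
        rw [← h] at hwn
        simp only [norm_one] at hwn
        exact absurd hwn.symm (ne_of_lt hα)
      have hconjb : (starRingEnd ℂ) (blaschke α z) = (v - (starRingEnd ℂ) α) / (1 - w) := by
        rw [blaschke, map_div₀]
        simp only [map_sub, map_mul, map_one, Complex.conj_conj, hv, hw]
      have hscal : v ^ n * (starRingEnd ℂ) (blaschke α z)
          - ∑ k ∈ Finset.range N, α ^ k * (v ^ (n + 1 + k) - (starRingEnd ℂ) α * v ^ (n + k))
          = v ^ n * (v - (starRingEnd ℂ) α) * (w ^ N / (1 - w)) := by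
        have hsum : ∑ k ∈ Finset.range N, α ^ k * (v ^ (n + 1 + k) - (starRingEnd ℂ) α * v ^ (n + k))
            = v ^ n * (v - (starRingEnd ℂ) α) * ((1 - w ^ N) / (1 - w)) := by
          have hgeom : ∑ k ∈ Finset.range N, w ^ k = (w ^ N - 1) / (w - 1) := geom_sum_eq hw1 N
          calc ∑ k ∈ Finset.range N, α ^ k * (v ^ (n + 1 + k) - (starRingEnd ℂ) α * v ^ (n + k))
              = ∑ k ∈ Finset.range N, (v ^ n * (v - (starRingEnd ℂ) α)) * w ^ k := by
                refine Finset.sum_congr rfl (fun k _ => ?_)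
                rw [hw, mul_pow, zpow_add₀ hcz0 (n+1) (k:ℤ), zpow_add₀ hcz0 n (k:ℤ),
                  zpow_add₀ hcz0 n 1, zpow_one, zpow_natCast]
                ring
            _ = (v ^ n * (v - (starRingEnd ℂ) α)) * ∑ k ∈ Finset.range N, w ^ k := by
                rw [Finset.mul_sum]
            _ = v ^ n * (v - (starRingEnd ℂ) α) * ((1 - w ^ N) / (1 - w)) := by
                rw [hgeom]
                congr 1
                rw [div_eq_div_iff (by intro h; apply hd; rw [sub_eq_zero] at h ⊢; exact h.symm) hd]
                ring
        rw [hsum, hconjb]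
        field_simp
        ring
      have heq : F z - gN z = (v ^ n * (v - (starRingEnd ℂ) α) * (w ^ N / (1 - w))) • g z := by
        rw [hF, hgN]
        simp only
        rw [← hscal, sub_smul, Finset.sum_smul]
      rw [heq, norm_smul]
      have hnorm1 : ‖v ^ n * (v - (starRingEnd ℂ) α) * (w ^ N / (1 - w))‖
          ≤ (1 + ‖α‖) / (1 - ‖α‖) * ‖α‖ ^ N := by
        rw [norm_mul, norm_mul, zpow_norm_one hcz, one_mul, norm_div, norm_pow, hwn]
        have hb1 : ‖v - (starRingEnd ℂ) α‖ ≤ 1 + ‖α‖ := by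
          refine (norm_sub_le _ _).trans ?_
          rw [hcz, RCLike.norm_conj]
        have h3 : (0:ℝ) < 1 - ‖α‖ := by linarith
        have hb2 : 1 - ‖α‖ ≤ ‖1 - w‖ := by
          calc 1 - ‖α‖ = ‖(1:ℂ)‖ - ‖w‖ := by rw [norm_one, hwn]
            _ ≤ ‖1 - w‖ := norm_sub_norm_le _ _
        have hb3 : ‖α‖ ^ N / ‖1 - w‖ ≤ ‖α‖ ^ N / (1 - ‖α‖) :=
          div_le_div_of_nonneg_left (by positivity) h3 hb2
        calc ‖v - (starRingEnd ℂ) α‖ * (‖α‖ ^ N / ‖1 - w‖)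
            ≤ (1 + ‖α‖) * (‖α‖ ^ N / (1 - ‖α‖)) :=
              mul_le_mul hb1 hb3 (by positivity) (by positivity)
          _ = (1 + ‖α‖) / (1 - ‖α‖) * ‖α‖ ^ N := by ring
      calc ‖v ^ n * (v - (starRingEnd ℂ) α) * (w ^ N / (1 - w))‖ * ‖g z‖
          ≤ ((1 + ‖α‖) / (1 - ‖α‖) * ‖α‖ ^ N) * C := by
            refine mul_le_mul hnorm1 h1 (norm_nonneg _)
              (mul_nonneg (div_nonneg (by positivity) (by linarith)) (by positivity))
        _ = (1 + ‖α‖) / (1 - ‖α‖) * C * ‖α‖ ^ N := by ring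
    have hsub : ∫ z, (F z - gN z) ∂mT = (∫ z, F z ∂mT) - ∫ z, gN z ∂mT :=
      integral_sub hFint hgNint
    have heq2 : (∫ z, F z ∂mT) - S N = ∫ z, (F z - gN z) ∂mT := by
      rw [hsub, hgNval]
    rw [heq2]
    have := norm_integral_le_of_norm_le_const (μ := mT) hrem
    simpa using this
  -- conclude: S tends to both 0 and ∫ F
  have hSlim2 : Filter.Tendsto S Filter.atTop (nhds (∫ z, F z ∂mT)) := by
    rw [← tendsto_sub_nhds_zero_iff]
    refine squeeze_zero_norm (a := fun N => (1 + ‖α‖) / (1 - ‖α‖) * C * ‖α‖ ^ N)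
      (fun N => by rw [norm_sub_rev]; exact hkey N) ?_
    rw [show (0:ℝ) = (1 + ‖α‖) / (1 - ‖α‖) * C * 0 by ring]
    exact (tendsto_pow_atTop_nhds_zero_of_lt_one (norm_nonneg α) hα).const_mul _
  exact tendsto_nhds_unique hSlim2 hSlim

/- ### Operator algebra for Blaschke–Potapov factors -/

lemma adjoint_theta (c : ℂ) (P : E →L[ℂ] E) (hP : ContinuousLinearMap.adjoint P = P) :
    ContinuousLinearMap.adjoint (c • P + (1 - P)) = (starRingEnd ℂ) c • P + (1 - P) := by
  rw [← ContinuousLinearMap.star_eq_adjoint, star_add, star_smul, star_sub, star_one,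
    ContinuousLinearMap.star_eq_adjoint, hP]
  rfl

lemma theta_mul (P : E →L[ℂ] E) (hP : P.comp P = P) (c d : ℂ) :
    (d • P + (1 - P)).comp (c • P + (1 - P)) = (d * c) • P + (1 - P) := by
  ext x
  have hPx : P (P x) = P x := by
    conv_rhs => rw [← hP]
    rfl
  simp only [ContinuousLinearMap.comp_apply, ContinuousLinearMap.add_apply,
    ContinuousLinearMap.smul_apply, ContinuousLinearMap.sub_apply, ContinuousLinearMap.one_apply,
    map_add, map_sub, _root_.map_smul, hPx, smul_smul]
  module

lemma theta_inner (P : E →L[ℂ] E) (hP1 : P.comp P = P) (hP2 : ContinuousLinearMap.adjoint P = P)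
    {b : ℂ} (hb : (starRingEnd ℂ) b * b = 1) :
    (ContinuousLinearMap.adjoint (b • P + (1 - P))).comp (b • P + (1 - P))
      = ContinuousLinearMap.id ℂ E := by
  rw [adjoint_theta b P hP2, theta_mul P hP1, hb, one_smul]
  rw [show (1 : E →L[ℂ] E) = ContinuousLinearMap.id ℂ E from rfl]
  abel


/-- Let `Φ ∈ H^∞(𝕋, B(E))` and `α ∈ 𝔻`. If the Poisson integral
`P[Φ](α)` does not have dense range, then, with `M := ker P[Φ](α)* = (ran P[Φ](α))^⊥`
(a nonzero closed subspace) and `P_M` the orthogonal projection onto `M`, the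
Blaschke-Potapov factor `b_α P_M + (I - P_M)` is a nontrivial left inner divisor of `Φ`. -/
theorem BPFactor_is_nontrivial_leftInnerDivisor (Φ : ℂ → E →L[ℂ] E) (hΦ : MemHinf Φ)
    (α : ℂ) (hα : ‖α‖ < 1) (hnd : ¬ DenseRange (poissonFn Φ α))
    (P : E →L[ℂ] E) (hP : IsOrthoProj P)
    (hPrange : (LinearMap.range (P : E →ₗ[ℂ] E) : Set E) =
      {x : E | ∀ y : E, (inner ℂ (poissonFn Φ α y) x : ℂ) = 0}) :
    (LinearMap.range (P : E →ₗ[ℂ] E) ≠ ⊥) ∧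
    IsLeftInnerDiv (fun z => blaschke α z • P + (1 - P)) Φ ∧
    ¬ ∃ U : E →L[ℂ] E, IsUnitaryOp U ∧ ∀ᵐ z ∂mT, blaschke α z • P + (1 - P) = U := by
  obtain ⟨r, hr0, hr⟩ := hΦ.bdd'
  have hP1 : P.comp P = P := hP.1
  have hP2 : ContinuousLinearMap.adjoint P = P := hP.2
  have hPpois : ∀ y : E, P (poissonFn Φ α y) = 0 := by
    intro y
    refine ext_inner_right ℂ (fun u => ?_)
    have h1 : (P u) ∈ (LinearMap.range (P : E →ₗ[ℂ] E) : Set E) := ⟨u, rfl⟩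
    rw [hPrange] at h1
    rw [inner_zero_left]
    calc (inner ℂ (P (poissonFn Φ α y)) u : ℂ)
        = inner ℂ (ContinuousLinearMap.adjoint P (poissonFn Φ α y)) u := by rw [hP2]
      _ = inner ℂ (poissonFn Φ α y) (P u) := ContinuousLinearMap.adjoint_inner_left P _ _
      _ = 0 := h1 y
  have hne : LinearMap.range (P : E →ₗ[ℂ] E) ≠ ⊥ := by
    intro hbot
    apply hnd
    refine poisson_dense hΦ hα (fun x hx => ?_)
    have hmem : x ∈ (LinearMap.range (P : E →ₗ[ℂ] E) : Set E) := by rw [hPrange]; exact hx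
    rw [hbot] at hmem
    simpa using hmem
  have hΘmeas : ∀ x : E, AEStronglyMeasurable (fun z => (blaschke α z • P + (1 - P)) x) mT := by
    intro x
    have h : (fun z => (blaschke α z • P + (1 - P)) x)
        = fun z => blaschke α z • (P x) + (1 - P) x := by
      ext z
      simp [ContinuousLinearMap.add_apply, ContinuousLinearMap.smul_apply]
    rw [h]
    exact ((measurable_blaschke α).aestronglyMeasurable.smul aestronglyMeasurable_const).add
      aestronglyMeasurable_const
  have hΘbdd : ∀ᵐ z ∂mT, ‖blaschke α z • P + (1 - P)‖ ≤ ‖P‖ + ‖1 - P‖ := by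
    filter_upwards [mT_ae_norm] with z hz
    calc ‖blaschke α z • P + (1 - P)‖ ≤ ‖blaschke α z • P‖ + ‖1 - P‖ := norm_add_le _ _
      _ = ‖P‖ + ‖1 - P‖ := by rw [norm_smul, blaschke_norm_eq_one hα hz, one_mul]
  have hΘneg : ∀ n : ℤ, n < 0 → ∀ x : E,
      fc (fun z => blaschke α z • P + (1 - P)) n x = 0 := by
    intro n hn x
    have hrew : ∀ z : ℂ, ((starRingEnd ℂ) z) ^ n • ((blaschke α z • P + (1 - P)) x)
        = (((starRingEnd ℂ) z) ^ n * blaschke α z) • (P x)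
          + ((starRingEnd ℂ) z) ^ n • ((1 - P) x) := by
      intro z
      simp [ContinuousLinearMap.add_apply, ContinuousLinearMap.smul_apply, smul_add, smul_smul]
    have i1 : Integrable (fun z => (((starRingEnd ℂ) z) ^ n * blaschke α z) • (P x)) mT := by
      refine integrable_mT _ ?_ ‖P x‖ ?_
      · exact ((((measurable_zpowC n).comp Complex.continuous_conj.measurable).mul
          (measurable_blaschke α)).aestronglyMeasurable).smul aestronglyMeasurable_const
      · filter_upwards [mT_ae_norm] with z hz
        rw [norm_smul, norm_mul, norm_zpow, RCLike.norm_conj, hz, one_zpow, one_mul,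
          blaschke_norm_eq_one hα hz, one_mul]
    have i2 : Integrable (fun z => ((starRingEnd ℂ) z) ^ n • ((1 - P) x)) mT := by
      refine integrable_mT _ ?_ ‖(1 - P) x‖ ?_
      · exact (((measurable_zpowC n).comp Complex.continuous_conj.measurable).aestronglyMeasurable).smul
          aestronglyMeasurable_const
      · filter_upwards [ae_norm_conj_zpow n] with z hz
        rw [norm_smul, hz, one_mul]
    simp only [fc]
    rw [integral_congr_ae (Filter.Eventually.of_forall hrew), integral_add i1 i2,
      integral_smul_const, integral_smul_const, blaschke_neg_coeff hα n hn,
      mT_conj_moment n hn, zero_smul, zero_smul, add_zero]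
  have hΘinner : ∀ᵐ z ∂mT, (ContinuousLinearMap.adjoint (blaschke α z • P + (1 - P))).comp
      (blaschke α z • P + (1 - P)) = ContinuousLinearMap.id ℂ E := by
    filter_upwards [mT_ae_norm] with z hz
    exact theta_inner P hP1 hP2 (blaschke_conj_mul hα hz)
  set A : ℂ → E →L[ℂ] E :=
    fun z => ((starRingEnd ℂ) (blaschke α z) • P + (1 - P)).comp (Φ z) with hA
  have hAmeas : ∀ x : E, AEStronglyMeasurable (fun z => A z x) mT := by
    intro x
    have h : (fun z => A z x) = fun z =>
        (starRingEnd ℂ) (blaschke α z) • (P (Φ z x)) + (1 - P) (Φ z x) := by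
      ext z
      simp [hA, ContinuousLinearMap.comp_apply, ContinuousLinearMap.add_apply,
        ContinuousLinearMap.smul_apply]
    rw [h]
    exact ((Complex.continuous_conj.measurable.comp (measurable_blaschke α)).aestronglyMeasurable.smul
      (P.continuous.comp_aestronglyMeasurable (hΦ.meas x))).add
      ((1 - P).continuous.comp_aestronglyMeasurable (hΦ.meas x))
  have hAbdd : ∀ᵐ z ∂mT, ‖A z‖ ≤ (‖P‖ + ‖1 - P‖) * r := by
    filter_upwards [hr, mT_ae_norm] with z h1 h2
    refine (ContinuousLinearMap.opNorm_comp_le _ _).trans ?_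
    have hb : ‖(starRingEnd ℂ) (blaschke α z) • P + (1 - P)‖ ≤ ‖P‖ + ‖1 - P‖ := by
      refine (norm_add_le _ _).trans ?_
      rw [norm_smul, RCLike.norm_conj, blaschke_norm_eq_one hα h2, one_mul]
    exact mul_le_mul hb h1 (norm_nonneg _) (by positivity)
  have hAneg : ∀ n : ℤ, n < 0 → ∀ x : E, fc A n x = 0 := by
    intro n hn x
    have hrew : ∀ z : ℂ, ((starRingEnd ℂ) z) ^ n • (A z x)
        = (((starRingEnd ℂ) z) ^ n * (starRingEnd ℂ) (blaschke α z)) • (P (Φ z x))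
          + ((starRingEnd ℂ) z) ^ n • ((1 - P) (Φ z x)) := by
      intro z
      simp [hA, ContinuousLinearMap.comp_apply, ContinuousLinearMap.add_apply,
        ContinuousLinearMap.smul_apply, smul_add, smul_smul]
    have i1 : Integrable (fun z =>
        (((starRingEnd ℂ) z) ^ n * (starRingEnd ℂ) (blaschke α z)) • (P (Φ z x))) mT := by
      refine integrable_mT _ ?_ (‖P‖ * (r * ‖x‖)) ?_
      · exact ((((measurable_zpowC n).comp Complex.continuous_conj.measurable).mul
          (Complex.continuous_conj.measurable.comp (measurable_blaschke α))).aestronglyMeasurable).smul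
          (P.continuous.comp_aestronglyMeasurable (hΦ.meas x))
      · filter_upwards [hr, mT_ae_norm] with z h1 h2
        rw [norm_smul, norm_mul, norm_zpow, RCLike.norm_conj, h2, one_zpow, RCLike.norm_conj,
          blaschke_norm_eq_one hα h2, one_mul, one_mul]
        calc ‖P (Φ z x)‖ ≤ ‖P‖ * ‖Φ z x‖ := P.le_opNorm _
          _ ≤ ‖P‖ * (r * ‖x‖) := by
              refine mul_le_mul_of_nonneg_left ?_ (norm_nonneg P)
              exact ((Φ z).le_opNorm x).trans (mul_le_mul_of_nonneg_right h1 (norm_nonneg x))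
    have i2 : Integrable (fun z => ((starRingEnd ℂ) z) ^ n • ((1 - P) (Φ z x))) mT := by
      refine ((1 - P).integrable_comp (fc_integrable hΦ hr n x)).congr ?_
      filter_upwards [] with z
      rw [ContinuousLinearMap.map_smul]
    simp only [fc]
    rw [integral_congr_ae (Filter.Eventually.of_forall hrew), integral_add i1 i2]
    have e1 := quot_neg_coeff hΦ hr hα P hPpois n hn x
    have e2 : ∫ z, ((starRingEnd ℂ) z) ^ n • ((1 - P) (Φ z x)) ∂mT = (1 - P) (fc Φ n x) := by
      have h := (1 - P).integral_comp_comm (fc_integrable hΦ hr n x)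
      simp only [ContinuousLinearMap.map_smul] at h
      exact h
    rw [e1, e2, hΦ.neg n hn x, map_zero, add_zero]
  have hfact : ∀ᵐ z ∂mT, Φ z = (blaschke α z • P + (1 - P)).comp (A z) := by
    filter_upwards [mT_ae_norm] with z hz
    rw [hA]
    simp only
    have hbb : blaschke α z * (starRingEnd ℂ) (blaschke α z) = 1 := by
      rw [mul_comm]; exact blaschke_conj_mul hα hz
    have hPP : P + (1 - P) = (1 : E →L[ℂ] E) := by abel
    have hth := theta_mul P hP1 ((starRingEnd ℂ) (blaschke α z)) (blaschke α z)
    rw [hbb, one_smul, hPP] at hth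
    ext x
    have h := congrArg (fun T : E →L[ℂ] E => T (Φ z x)) hth
    simp only [ContinuousLinearMap.comp_apply, ContinuousLinearMap.one_apply] at h ⊢
    exact h.symm
  refine ⟨hne, ⟨⟨⟨hΘmeas, ⟨‖P‖ + ‖1 - P‖, hΘbdd⟩, hΘneg⟩, hΘinner⟩,
    A, ⟨hAmeas, ⟨(‖P‖ + ‖1 - P‖) * r, hAbdd⟩, hAneg⟩, hfact⟩, ?_⟩
  rintro ⟨U, hU, hae⟩
  rw [Submodule.ne_bot_iff] at hne
  obtain ⟨x, ⟨v, hv⟩, hx0⟩ := hne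
  have hPx : P x = x := by
    rw [← show P v = x from hv]
    conv_lhs => rw [show P (P v) = (P.comp P) v from rfl, hP1]
  have hAe : ∀ᵐ z ∂mT, ‖z‖ = 1 ∧ blaschke α z • P + (1 - P) = U := mT_ae_norm.and hae
  have hne0 : mT ≠ 0 := IsProbabilityMeasure.ne_zero mT
  haveI : (MeasureTheory.ae mT).NeBot := ae_neBot.mpr hne0
  obtain ⟨z₀, hz₀1, hz₀2⟩ := hAe.exists
  have hsingle : ∀ᵐ z ∂mT, z = z₀ := by
    filter_upwards [hAe] with z hz
    obtain ⟨hz1, hz2⟩ := hz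
    have hop : blaschke α z • P + (1 - P) = blaschke α z₀ • P + (1 - P) := by rw [hz2, hz₀2]
    have happ := congrArg (fun T : E →L[ℂ] E => T x) hop
    simp only [ContinuousLinearMap.add_apply, ContinuousLinearMap.smul_apply,
      ContinuousLinearMap.sub_apply, ContinuousLinearMap.one_apply, hPx, sub_self, add_zero] at happ
    exact blaschke_inj hα hz1 hz₀1 (smul_left_injective ℂ hx0 happ)
  have h1 : mT ({z₀}ᶜ) = 0 := by
    have hc : ({z₀}ᶜ : Set ℂ) = {a : ℂ | ¬ a = z₀} := by ext a; simp
    rw [hc]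
    exact ae_iff.mp hsingle
  have h2 := measure_union_le (μ := mT) {z₀} ({z₀}ᶜ)
  rw [Set.union_compl_self, measure_univ, mT_singleton z₀, h1] at h2
  simp at h2


end
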